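/- Let u : ℝ → ℝ be continuous and 1-periodic, and let 0 < a < b < 1 be such that u(x) = −1 for every x ∈ [a,b]. Suppose that ∫₀¹ 𝒢′(b−y)·(u(y) + u(y)²/2) dy ≤ ∫₀¹ 𝒢′(a−y)·(u(y) + u(y)²/2) dy. Then u(x) = −1 for every x ∈ ℝ. -/

import Mathlib

open MeasureTheory Real

/-- The 1-periodic kernel `𝒢′(x) = sinh(x - ⌊x⌋ - 1/2)/(2 sinh(1/2))`, the derivative of the
periodic Green's function of `1 - d²/dx²` on the circle `ℝ/ℤ`. -/
noncomputable def bbmGper' (x : ℝ) : ℝ :=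
  Real.sinh (x - ↑⌊x⌋ - 1 / 2) / (2 * Real.sinh (1 / 2))


lemma bbm_measurable : Measurable bbmGper' := by
  have h : bbmGper' = fun x => Real.sinh (Int.fract x - 1/2) / (2 * Real.sinh (1/2)) := by
    funext x; rfl
  rw [h]
  exact (Real.continuous_sinh.measurable.comp (measurable_fract.sub measurable_const)).div
    measurable_const

lemma bbm_bound (x : ℝ) : |bbmGper' x| ≤ 1/2 := by
  have hs : 0 < Real.sinh (1/2) := Real.sinh_pos_iff.2 (by norm_num)
  have h1 : |Real.sinh (x - ↑⌊x⌋ - 1/2)| ≤ Real.sinh (1/2) := by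
    rw [Real.abs_sinh]
    apply Real.sinh_le_sinh.2
    have h2 : (0:ℝ) ≤ x - ↑⌊x⌋ := sub_nonneg.2 (Int.floor_le x)
    have h3 : x - ↑⌊x⌋ < 1 := by have := Int.lt_floor_add_one x; linarith
    rw [abs_le]; constructor <;> linarith
  rw [bbmGper', abs_div, abs_of_pos (by positivity : (0:ℝ) < 2 * Real.sinh (1/2)),
    div_le_iff₀ (by positivity)]
  nlinarith

lemma bbm_eq_pos {x : ℝ} (h0 : 0 ≤ x) (h1 : x < 1) :
    bbmGper' x = Real.sinh (x - 1/2) / (2 * Real.sinh (1/2)) := by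
  have : ⌊x⌋ = 0 := Int.floor_eq_zero_iff.2 ⟨h0, h1⟩
  simp [bbmGper', this]

lemma bbm_eq_neg {x : ℝ} (h0 : -1 ≤ x) (h1 : x < 0) :
    bbmGper' x = Real.sinh (x + 1/2) / (2 * Real.sinh (1/2)) := by
  have h : ⌊x⌋ = -1 := by
    rw [Int.floor_eq_iff]; push_cast; constructor <;> linarith
  rw [bbmGper', h]; push_cast; ring_nf

lemma integral_sinh' (p q : ℝ) : ∫ x in p..q, Real.sinh x = Real.cosh q - Real.cosh p :=
  intervalIntegral.integral_eq_sub_of_hasDerivAt (fun x _ => Real.hasDerivAt_cosh x)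
    (Real.continuous_sinh.intervalIntegrable p q)

lemma intervalIntegrable_of_meas_bdd {h : ℝ → ℝ} (hm : Measurable h) {C : ℝ}
    (hb : ∀ x, |h x| ≤ C) (p q : ℝ) : IntervalIntegrable h volume p q := by
  rw [intervalIntegrable_iff]
  apply Measure.integrableOn_of_bounded (M := C) measure_Ioc_lt_top.ne hm.aestronglyMeasurable
  exact ae_of_all _ (fun x => by simpa using hb x)

lemma bbm_integral_zero {c : ℝ} (h0 : 0 < c) (h1 : c < 1) :
    (∫ y in (0:ℝ)..1, bbmGper' (c - y)) = 0 := by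
  have hii : ∀ p q : ℝ, IntervalIntegrable (fun y => bbmGper' (c - y)) volume p q := fun p q =>
    intervalIntegrable_of_meas_bdd (bbm_measurable.comp (measurable_const.sub measurable_id))
      (fun x => bbm_bound _) p q
  rw [← intervalIntegral.integral_add_adjacent_intervals (hii 0 c) (hii c 1)]
  have e1 : (∫ y in (0:ℝ)..c, bbmGper' (c - y)) =
      ∫ y in (0:ℝ)..c, Real.sinh ((c - 1/2) - y) / (2 * Real.sinh (1/2)) := by
    apply intervalIntegral.integral_congr
    intro y hy
    rw [Set.uIcc_of_le (le_of_lt h0)] at hy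
    show bbmGper' (c - y) = _
    rw [bbm_eq_pos (by linarith [hy.1, hy.2] : (0:ℝ) ≤ c - y) (by linarith [hy.1] : c - y < 1)]
    ring_nf
  have e2 : (∫ y in c..(1:ℝ), bbmGper' (c - y)) =
      ∫ y in c..(1:ℝ), Real.sinh ((c + 1/2) - y) / (2 * Real.sinh (1/2)) := by
    apply intervalIntegral.integral_congr_ae
    filter_upwards with y hy
    rw [Set.uIoc_of_le (le_of_lt h1)] at hy
    show bbmGper' (c - y) = _
    rw [bbm_eq_neg (by linarith [hy.1, hy.2] : (-1:ℝ) ≤ c - y) (by linarith [hy.1] : c - y < 0)]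
    ring_nf
  rw [e1, e2, intervalIntegral.integral_div, intervalIntegral.integral_div,
    intervalIntegral.integral_comp_sub_left (fun x => Real.sinh x) (c - 1/2),
    intervalIntegral.integral_comp_sub_left (fun x => Real.sinh x) (c + 1/2),
    integral_sinh', integral_sinh']
  have h1' : Real.cosh (c - 1/2 - 0) = Real.cosh (c + 1/2 - 1) := by congr 1; ring
  have h2 : Real.cosh (c - 1/2 - c) = Real.cosh (c + 1/2 - c) := by
    have h3 : c - 1/2 - c = -(c + 1/2 - c) := by ring
    rw [h3, Real.cosh_neg]
  rw [h1', h2]; ring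

/-- Time-slice unique continuation for the periodic BBM: if a continuous 1-periodic `u` equals
`-1` on `[a,b] ⊂ (0,1)` and `∫₀¹ 𝒢′(b-y)(u+u²/2) dy ≤ ∫₀¹ 𝒢′(a-y)(u+u²/2) dy`
(i.e. `∂ₜu(b,t₀) ≥ ∂ₜu(a,t₀)`), then `u ≡ -1`. -/
theorem bbm_unique_continuation_periodic (u : ℝ → ℝ)
    (hcont : Continuous u) (hper : Function.Periodic u 1)
    (a b : ℝ) (h0a : 0 < a) (hab : a < b) (hb1 : b < 1)
    (hm1 : ∀ x ∈ Set.Icc a b, u x = -1)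
    (hineq : (∫ y in (0:ℝ)..1, bbmGper' (b - y) * (u y + u y ^ 2 / 2)) ≤
      ∫ y in (0:ℝ)..1, bbmGper' (a - y) * (u y + u y ^ 2 / 2)) :
    ∀ x : ℝ, u x = -1 := by
  have hs : 0 < Real.sinh (1/2) := Real.sinh_pos_iff.2 (by norm_num)
  set K : ℝ → ℝ := fun y => bbmGper' (a - y) - bbmGper' (b - y) with hK
  set g : ℝ → ℝ := fun y => (u y + 1)^2 / 2 with hg
  have hgc : Continuous g := by fun_prop
  have hg0 : ∀ y, 0 ≤ g y := fun y => by positivity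
  -- global bound on u
  obtain ⟨M, hM⟩ := (isCompact_Icc (a := (0:ℝ)) (b := 1)).exists_bound_of_continuousOn
    hcont.continuousOn
  have huM : ∀ x, |u x| ≤ M := by
    intro x
    have h1 : u (Int.fract x) = u x := by
      have h := hper.sub_int_mul_eq (x := x) ⌊x⌋
      rw [mul_one] at h
      exact h
    rw [← h1]
    exact hM _ ⟨Int.fract_nonneg x, le_of_lt (Int.fract_lt_one x)⟩
  have hM0 : 0 ≤ M := le_trans (abs_nonneg _) (huM 0)
  -- measurability
  have hKmeas : Measurable K :=
    (bbm_measurable.comp (measurable_const.sub measurable_id)).sub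
      (bbm_measurable.comp (measurable_const.sub measurable_id))
  have hKbd : ∀ y, |K y| ≤ 1 := by
    intro y
    have := bbm_bound (a - y); have := bbm_bound (b - y)
    simp only [hK]
    calc |bbmGper' (a - y) - bbmGper' (b - y)| ≤ |bbmGper' (a - y)| + |bbmGper' (b - y)| :=
      abs_sub _ _
    _ ≤ 1 := by linarith
  -- sign lemmas
  have hK1 : ∀ y : ℝ, 0 < y → y < a → K y < 0 := by
    intro y hy0 hya
    simp only [hK]
    rw [bbm_eq_pos (by linarith : (0:ℝ) ≤ a - y) (by linarith : a - y < 1),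
      bbm_eq_pos (by linarith : (0:ℝ) ≤ b - y) (by linarith : b - y < 1),
      div_sub_div_same]
    apply div_neg_of_neg_of_pos _ (by positivity)
    have : Real.sinh (a - y - 1/2) < Real.sinh (b - y - 1/2) :=
      Real.sinh_lt_sinh.2 (by linarith)
    linarith
  have hK2 : ∀ y : ℝ, b < y → y ≤ 1 → K y < 0 := by
    intro y hyb hy1
    simp only [hK]
    rw [bbm_eq_neg (by linarith : (-1:ℝ) ≤ a - y) (by linarith : a - y < 0),
      bbm_eq_neg (by linarith : (-1:ℝ) ≤ b - y) (by linarith : b - y < 0),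
      div_sub_div_same]
    apply div_neg_of_neg_of_pos _ (by positivity)
    have : Real.sinh (a - y + 1/2) < Real.sinh (b - y + 1/2) :=
      Real.sinh_lt_sinh.2 (by linarith)
    linarith
  have hB : ∀ y ∈ Set.Ioc (0:ℝ) 1, K y * g y ≤ 0 := by
    intro y hy
    rcases lt_or_ge y a with h | h
    · exact mul_nonpos_iff.2 (Or.inr ⟨le_of_lt (hK1 y hy.1 h), hg0 y⟩)
    rcases le_or_gt y b with h' | h'
    · have : u y = -1 := hm1 y ⟨h, h'⟩
      simp [hg, this]
    · exact mul_nonpos_iff.2 (Or.inr ⟨le_of_lt (hK2 y h' hy.2), hg0 y⟩)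
  -- integrabilities
  have hgbd : ∀ y, |g y| ≤ (M + 1)^2 / 2 := by
    intro y
    have := huM y
    rw [hg, abs_div, abs_of_nonneg (by positivity : (0:ℝ) ≤ (u y + 1)^2)]
    have h1 : |u y + 1| ≤ M + 1 := by
      obtain ⟨ha', hb'⟩ := abs_le.1 (huM y); rw [abs_le]; constructor <;> linarith
    obtain ⟨hl, hr⟩ := abs_le.1 h1
    have h2 : (u y + 1)^2 ≤ (M + 1)^2 := by nlinarith
    norm_num
    linarith
  have hKgbd : ∀ y, |K y * g y| ≤ (M + 1)^2 / 2 := by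
    intro y
    rw [abs_mul]
    calc |K y| * |g y| ≤ 1 * ((M + 1)^2 / 2) :=
      mul_le_mul (hKbd y) (hgbd y) (abs_nonneg _) (by norm_num)
    _ = (M + 1)^2 / 2 := by ring
  have hKgmeas : Measurable fun y => K y * g y := hKmeas.mul hgc.measurable
  have hKg_ii : IntervalIntegrable (fun y => K y * g y) volume 0 1 :=
    intervalIntegrable_of_meas_bdd hKgmeas hKgbd 0 1
  have hK_ii : IntervalIntegrable K volume 0 1 :=
    intervalIntegrable_of_meas_bdd hKmeas hKbd 0 1
  -- f-integrability
  have hf_meas : Measurable fun y => u y + u y ^ 2 / 2 := by fun_prop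
  have hfbd : ∀ y, |u y + u y ^ 2 / 2| ≤ M + M^2 / 2 := by
    intro y
    have h := abs_le.1 (huM y)
    have h2 : u y ^ 2 ≤ M ^ 2 := by nlinarith
    rw [abs_le]; constructor <;> nlinarith [sq_nonneg (u y)]
  have hbf_ii : ∀ c : ℝ, IntervalIntegrable
      (fun y => bbmGper' (c - y) * (u y + u y ^ 2 / 2)) volume 0 1 := by
    intro c
    apply intervalIntegrable_of_meas_bdd
      ((bbm_measurable.comp (measurable_const.sub measurable_id)).mul hf_meas)
      (C := (1/2) * (M + M^2/2))
    intro y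
    rw [Pi.mul_apply, abs_mul]
    exact mul_le_mul (bbm_bound _) (hfbd y) (abs_nonneg _) (by norm_num)
  -- Step A
  have hKf : (∫ y in (0:ℝ)..1, K y * (u y + u y ^ 2 / 2)) =
      (∫ y in (0:ℝ)..1, bbmGper' (a - y) * (u y + u y ^ 2 / 2)) -
      ∫ y in (0:ℝ)..1, bbmGper' (b - y) * (u y + u y ^ 2 / 2) := by
    rw [← intervalIntegral.integral_sub (hbf_ii a) (hbf_ii b)]
    apply intervalIntegral.integral_congr
    intro y _
    simp only [hK]; ring
  have hKf_nonneg : 0 ≤ ∫ y in (0:ℝ)..1, K y * (u y + u y ^ 2 / 2) := by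
    rw [hKf]; linarith
  have hKzero : (∫ y in (0:ℝ)..1, K y) = 0 := by
    have hii : ∀ c : ℝ, IntervalIntegrable (fun y => bbmGper' (c - y)) volume 0 1 := fun c =>
      intervalIntegrable_of_meas_bdd (bbm_measurable.comp (measurable_const.sub measurable_id))
        (fun x => bbm_bound _) 0 1
    have h := intervalIntegral.integral_sub (hii a) (hii b)
    simp only [hK]
    rw [h, bbm_integral_zero h0a (lt_trans hab hb1),
      bbm_integral_zero (lt_trans h0a hab) hb1, sub_zero]
  have hsplit : (∫ y in (0:ℝ)..1, K y * (u y + u y ^ 2 / 2)) =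
      (∫ y in (0:ℝ)..1, K y * g y) - (1/2) * ∫ y in (0:ℝ)..1, K y := by
    rw [← intervalIntegral.integral_const_mul, ← intervalIntegral.integral_sub hKg_ii
      (hK_ii.const_mul (1/2))]
    apply intervalIntegral.integral_congr
    intro y _
    simp only [hK, hg]; ring
  have hA : 0 ≤ ∫ y in Set.Ioc (0:ℝ) 1, K y * g y := by
    have : 0 ≤ ∫ y in (0:ℝ)..1, K y * g y := by
      rw [hsplit, hKzero] at hKf_nonneg
      linarith [hKf_nonneg]
    rwa [intervalIntegral.integral_of_le (by norm_num : (0:ℝ) ≤ 1)] at this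
  -- Step C : pointwise on (0,1)
  have key : ∀ x ∈ Set.Ioo (0:ℝ) 1, u x = -1 := by
    intro x hx
    by_contra hne
    have hxab : x < a ∨ b < x := by
      by_contra hc
      push_neg at hc
      exact hne (hm1 x ⟨hc.1, hc.2⟩)
    obtain ⟨l, r, hxlr, hlr01, hKneg⟩ :
        ∃ l r : ℝ, x ∈ Set.Ioo l r ∧ Set.Ioo l r ⊆ Set.Ioo 0 1 ∧
          ∀ y ∈ Set.Ioo l r, K y < 0 := by
      rcases hxab with h | h
      · exact ⟨0, a, ⟨hx.1, h⟩, fun y hy => ⟨hy.1, lt_trans hy.2 (lt_trans hab hb1)⟩,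
          fun y hy => hK1 y hy.1 hy.2⟩
      · exact ⟨b, 1, ⟨h, hx.2⟩, fun y hy => ⟨lt_trans (lt_trans h0a hab) hy.1, hy.2⟩,
          fun y hy => hK2 y hy.1 (le_of_lt hy.2)⟩
    have hgx : 0 < g x := by
      have hne' : u x + 1 ≠ 0 := fun h => hne (by linarith)
      have : (0:ℝ) < (u x + 1)^2 := lt_of_le_of_ne (sq_nonneg _) (Ne.symm (pow_ne_zero 2 hne'))
      simp only [hg]; linarith
    set V : Set ℝ := Set.Ioo l r ∩ g ⁻¹' Set.Ioi 0 with hV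
    have hVopen : IsOpen V := isOpen_Ioo.inter (isOpen_Ioi.preimage hgc)
    have hxV : x ∈ V := ⟨hxlr, hgx⟩
    obtain ⟨ε, hε, hball⟩ := Metric.isOpen_iff.1 hVopen x hxV
    set δ := ε / 2 with hδ
    have hδ0 : 0 < δ := by positivity
    have hIccV : Set.Icc (x - δ) (x + δ) ⊆ V := by
      intro y hy
      apply hball
      rw [Metric.mem_ball, Real.dist_eq, abs_lt]
      constructor <;> [linarith [hy.1]; linarith [hy.2]]
    have hIoc01 : Set.Ioc (x - δ) (x + δ) ⊆ Set.Ioc (0:ℝ) 1 := by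
      have h1 := hlr01 (hIccV ⟨le_refl _, by linarith⟩).1
      have h2 := hlr01 (hIccV ⟨by linarith, le_refl _⟩).1
      exact Set.Ioc_subset_Ioc (le_of_lt h1.1) (le_of_lt h2.2)
    have hpos : 0 < ∫ y in (x - δ)..(x + δ), -(K y * g y) := by
      apply intervalIntegral.intervalIntegral_pos_of_pos_on
      · exact intervalIntegrable_of_meas_bdd hKgmeas.neg
          (fun y => by rw [Pi.neg_apply, abs_neg]; exact hKgbd y) _ _
      · intro y hy
        have hyV : y ∈ V := hIccV ⟨le_of_lt hy.1, le_of_lt hy.2⟩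
        have hKy : K y < 0 := hKneg y hyV.1
        have hgy : 0 < g y := hyV.2
        have := mul_neg_of_neg_of_pos hKy hgy
        linarith
      · linarith
    rw [intervalIntegral.integral_of_le (by linarith : x - δ ≤ x + δ)] at hpos
    have hmono : (∫ y in Set.Ioc (x - δ) (x + δ), -(K y * g y)) ≤
        ∫ y in Set.Ioc (0:ℝ) 1, -(K y * g y) := by
      apply setIntegral_mono_set
      · exact (intervalIntegrable_of_meas_bdd hKgmeas.neg
          (fun y => by rw [Pi.neg_apply, abs_neg]; exact hKgbd y) 0 1).1
      · exact (ae_restrict_iff' measurableSet_Ioc).2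
          (ae_of_all _ fun y hy => neg_nonneg.2 (hB y hy))
      · exact Filter.Eventually.of_forall hIoc01
    rw [integral_neg] at hpos
    rw [integral_neg, integral_neg] at hmono
    linarith
  -- conclude
  have hclosed : IsClosed {x : ℝ | u x = -1} := isClosed_eq hcont continuous_const
  have hIcc : Set.Icc (0:ℝ) 1 ⊆ {x : ℝ | u x = -1} := by
    rw [← closure_Ioo (by norm_num : (0:ℝ) ≠ 1)]
    exact hclosed.closure_subset_iff.2 key
  intro x
  have h1 : u (Int.fract x) = u x := by
    have h := hper.sub_int_mul_eq (x := x) ⌊x⌋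
    rw [mul_one] at h
    exact h
  rw [← h1]
  exact hIcc ⟨Int.fract_nonneg x, le_of_lt (Int.fract_lt_one x)⟩
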